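/- Let π ◁ G with φ: G → G an endomorphism restricting to π and trivial on G/π. The inclusion R[π] → R[G] is equivariant for the twisted conjugation G-action β ↦ φ(γ)βγ⁻¹ (i.e., this action preserves π), and induces a split injection R[π_{φ'}] → R[G_φ] of R-modules, where G_φ = G/(β ∼ φ(γ)βγ⁻¹). -/

import Mathlib

open scoped Classical

/-- Twisted conjugacy relation on `π`: `a ∼ b` iff `b = φ(γ) a γ⁻¹` for some `γ ∈ G`. -/
def twRel {G : Type} [Group G] (π : Subgroup G) (φ : G →* G) (a b : ↥π) : Prop :=
  ∃ γ : G, (b : G) = φ γ * ↑a * γ⁻¹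

/-- The set of twisted conjugacy classes `π_{φ'}`. -/
def TwCl {G : Type} [Group G] (π : Subgroup G) (φ : G →* G) := Quot (twRel π φ)

/-- The twisted trace `tr : R[G] → R[π_{φ'}]`, sending `Σ r_g·g` to `Σ_{g ∈ π} r_g·[g]`. -/
noncomputable def twTr (R : Type) {G : Type} [CommRing R] [Group G] (π : Subgroup G)
    (φ : G →* G) (a : MonoidAlgebra R G) : TwCl π φ →₀ R :=
  Finsupp.sum a.coeff fun g r =>
    if h : g ∈ π then Finsupp.single (Quot.mk (twRel π φ) ⟨g, h⟩) r else 0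


/-- Twisted conjugacy relation on all of `G`: `a ∼ b` iff `b = φ(γ) a γ⁻¹`. -/
def twRelG {G : Type} [Group G] (φ : G →* G) (a b : G) : Prop :=
  ∃ γ : G, b = φ γ * a * γ⁻¹

/-- The set `G_φ` of `φ`-twisted conjugacy classes of `G`. -/
def TwClG (G : Type) [Group G] (φ : G →* G) := Quot (twRelG φ)


lemma twRelG_equiv {G : Type} [Group G] (φ : G →* G) : Equivalence (twRelG φ) where
  refl a := ⟨1, by simp⟩
  symm := by
    rintro a b ⟨γ, rfl⟩
    exact ⟨γ⁻¹, by simp [map_inv]; group⟩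
  trans := by
    rintro a b c ⟨γ, rfl⟩ ⟨δ, rfl⟩
    exact ⟨δ * γ, by simp [map_mul]; group⟩

/-- The twisted conjugation action preserves `π`, and the inclusion `R[π] → R[G]`
induces a split injection `R[π_{φ'}] → R[G_φ]` of `R`-modules. -/
theorem statement16 (R : Type) {G : Type} [CommRing R] [Group G]
    (π : Subgroup G) [π.Normal] (φ : G →* G)
    (hres : ∀ g ∈ π, φ g ∈ π) (hquot : ∀ g : G, φ g * g⁻¹ ∈ π) :
    (∀ γ a : G, a ∈ π → φ γ * a * γ⁻¹ ∈ π) ∧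
    ∃ j : TwCl π φ → TwClG G φ,
      (∀ x : ↥π, j (Quot.mk (twRel π φ) x) = Quot.mk (twRelG φ) (x : G)) ∧
      Function.Injective (Finsupp.lmapDomain R R j : (TwCl π φ →₀ R) → (TwClG G φ →₀ R)) ∧
      ∃ p : (TwClG G φ →₀ R) →ₗ[R] (TwCl π φ →₀ R),
        p.comp (Finsupp.lmapDomain R R j) = LinearMap.id := by
  have step1 : ∀ γ a : G, a ∈ π → φ γ * a * γ⁻¹ ∈ π := by
    intro γ a ha
    have h1 : φ γ * γ⁻¹ ∈ π := hquot γ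
    have h2 : γ * a * γ⁻¹ ∈ π := Subgroup.Normal.conj_mem ‹π.Normal› a ha γ
    have : (φ γ * γ⁻¹) * (γ * a * γ⁻¹) = φ γ * a * γ⁻¹ := by group
    rw [← this]; exact mul_mem h1 h2
  refine ⟨step1, ?_⟩
  have hj : ∀ a b : ↥π, twRel π φ a b →
      Quot.mk (twRelG φ) (a : G) = Quot.mk (twRelG φ) (b : G) := by
    rintro a b ⟨γ, hγ⟩
    exact Quot.sound ⟨γ, hγ⟩
  set j : TwCl π φ → TwClG G φ := Quot.lift (fun x => Quot.mk (twRelG φ) (x : G)) hj with hjdef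
  have hjmk : ∀ x : ↥π, j (Quot.mk (twRel π φ) x) = Quot.mk (twRelG φ) (x : G) := fun _ => rfl
  have hrel : ∀ a b : G, twRelG φ a b → (a ∈ π ↔ b ∈ π) := by
    intro a b hab
    constructor
    · rintro ha; obtain ⟨γ, rfl⟩ := hab; exact step1 γ a ha
    · intro hb; obtain ⟨γ, rfl⟩ := (twRelG_equiv φ).symm hab; exact step1 γ b hb
  have hjinj : Function.Injective j := by
    intro c d
    induction c using Quot.ind with | _ x =>
    induction d using Quot.ind with | _ y =>
    intro h
    have h' : twRelG φ (x : G) (y : G) :=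
      ((twRelG_equiv φ).eqvGen_iff).mp (Quot.eq.mp h)
    obtain ⟨γ, hγ⟩ := h'
    exact Quot.sound ⟨γ, hγ⟩
  have hs : ∀ a b : G, twRelG φ a b →
      (if h : a ∈ π then Finsupp.single (Quot.mk (twRel π φ) ⟨a, h⟩) (1 : R) else 0) =
      (if h : b ∈ π then Finsupp.single (Quot.mk (twRel π φ) ⟨b, h⟩) (1 : R) else 0) := by
    intro a b hab
    by_cases ha : a ∈ π
    · have hb : b ∈ π := (hrel a b hab).mp ha
      obtain ⟨γ, hγ⟩ := hab
      rw [dif_pos ha, dif_pos hb, Quot.sound (⟨γ, hγ⟩ : twRel π φ ⟨a, ha⟩ ⟨b, hb⟩)]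
    · have hb : b ∉ π := fun hb => ha ((hrel a b hab).mpr hb)
      rw [dif_neg ha, dif_neg hb]
  set s : TwClG G φ → (TwCl π φ →₀ R) :=
    Quot.lift (fun g => if h : g ∈ π then Finsupp.single (Quot.mk (twRel π φ) ⟨g, h⟩) (1 : R) else 0) hs
    with hsdef
  refine ⟨j, hjmk, (Finsupp.mapDomain_injective hjinj : _),
    Finsupp.lsum R (fun c => LinearMap.toSpanSingleton R _ (s c)), ?_⟩
  apply Finsupp.lhom_ext
  intro c r
  induction c using Quot.ind with | _ x =>
  simp only [LinearMap.comp_apply, Finsupp.lmapDomain_apply, Finsupp.mapDomain_single,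
    Finsupp.lsum_single, LinearMap.id_apply, LinearMap.toSpanSingleton_apply]
  erw [Finsupp.mapDomain_single, Finsupp.lsum_single, LinearMap.toSpanSingleton_apply, hjmk]
  show r • (if h : (x:G) ∈ π then Finsupp.single (Quot.mk (twRel π φ) ⟨(x:G), h⟩) (1 : R) else 0) = _
  rw [dif_pos x.2]
  simp [Finsupp.smul_single]
  rfl
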